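/- If G is a Roman graph (i.e., γ_R(G) = 2γ(G)) with maximum degree at least 2, then b_R(G) ≥ b(G). -/

import Mathlib

open SimpleGraph Finset

/-- A Roman dominating function: values in {0,1,2}, every 0-vertex has a neighbor with value 2. -/
def IsRDF {V : Type*} (G : SimpleGraph V) (f : V → ℕ) : Prop :=
  (∀ v, f v ≤ 2) ∧ ∀ v, f v = 0 → ∃ u, G.Adj v u ∧ f u = 2

/-- The Roman domination number: minimum weight of a Roman dominating function. -/
noncomputable def romanDom {V : Type*} [Fintype V] (G : SimpleGraph V) : ℕ :=
  sInf {k | ∃ f : V → ℕ, IsRDF G f ∧ ∑ v, f v = k}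

/-- A dominating set. -/
def IsDomSet {V : Type*} (G : SimpleGraph V) (S : Set V) : Prop :=
  ∀ v, v ∈ S ∨ ∃ u ∈ S, G.Adj u v

/-- The domination number. -/
noncomputable def domNum {V : Type*} [Fintype V] (G : SimpleGraph V) : ℕ :=
  sInf {k | ∃ S : Set V, IsDomSet G S ∧ S.ncard = k}

/-- Degree of a vertex. -/
noncomputable def deg {V : Type*} (G : SimpleGraph V) (v : V) : ℕ :=
  (G.neighborSet v).ncard

/-- Maximum degree. -/
noncomputable def maxDeg {V : Type*} (G : SimpleGraph V) : ℕ :=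
  sSup {d | ∃ v, deg G v = d}

/-- Minimum degree. -/
noncomputable def minDeg {V : Type*} (G : SimpleGraph V) : ℕ :=
  sInf {d | ∃ v, deg G v = d}

/-- The Roman bondage number: minimum size of an edge set whose deletion increases `romanDom`. -/
noncomputable def romanBondage {V : Type*} [Fintype V] (G : SimpleGraph V) : ℕ :=
  sInf {k | ∃ B : Set (Sym2 V), B ⊆ G.edgeSet ∧
    romanDom (G.deleteEdges B) > romanDom G ∧ B.ncard = k}

/-- The bondage number: minimum size of an edge set whose deletion increases `domNum`. -/
noncomputable def bondage {V : Type*} [Fintype V] (G : SimpleGraph V) : ℕ :=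
  sInf {k | ∃ B : Set (Sym2 V), B ⊆ G.edgeSet ∧
    domNum (G.deleteEdges B) > domNum G ∧ B.ncard = k}

/-- A vertex cover. -/
def IsVC {V : Type*} (G : SimpleGraph V) (S : Set V) : Prop :=
  ∀ u v, G.Adj u v → u ∈ S ∨ v ∈ S

/-- The vertex covering number. -/
noncomputable def vcNum {V : Type*} [Fintype V] (G : SimpleGraph V) : ℕ :=
  sInf {k | ∃ S : Set V, IsVC G S ∧ S.ncard = k}

lemma domSet_nonempty {V : Type*} [Fintype V] (H : SimpleGraph V) :
    {k | ∃ S : Set V, IsDomSet H S ∧ S.ncard = k}.Nonempty :=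
  ⟨(Set.univ : Set V).ncard, Set.univ, fun _ => Or.inl trivial, rfl⟩

lemma roman_le_two_dom {V : Type*} [Fintype V] (H : SimpleGraph V) :
    romanDom H ≤ 2 * domNum H := by
  classical
  obtain ⟨S, hS, hcard⟩ := Nat.sInf_mem (domSet_nonempty H)
  set f : V → ℕ := fun v => if v ∈ S then 2 else 0 with hf
  have hRDF : IsRDF H f := by
    constructor
    · intro v; by_cases h : v ∈ S <;> simp [hf, h]
    · intro v hv
      by_cases h : v ∈ S
      · simp [hf, h] at hv
      · rcases hS v with h' | ⟨u, hu, hadj⟩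
        · exact absurd h' h
        · exact ⟨u, hadj.symm, by simp [hf, hu]⟩
  have hsum : ∑ v, f v = 2 * S.ncard := by
    rw [Set.ncard_eq_toFinset_card']
    rw [show ∑ v, f v = ∑ v ∈ Finset.univ.filter (· ∈ S), 2 by
      rw [Finset.sum_filter]]
    rw [show Finset.univ.filter (· ∈ S) = S.toFinset by ext x; simp]
    rw [Finset.sum_const]
    ring
  have := Nat.sInf_le (s := {k | ∃ f : V → ℕ, IsRDF H f ∧ ∑ v, f v = k})
    ⟨f, hRDF, rfl⟩
  rw [hsum, hcard] at this
  exact this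

lemma romanDom_deleteAll_ge {V : Type*} [Fintype V] (G : SimpleGraph V) :
    Fintype.card V ≤ romanDom (G.deleteEdges G.edgeSet) := by
  classical
  set H := G.deleteEdges G.edgeSet with hH
  have hbot : ∀ a b : V, ¬ H.Adj a b := by
    intro a b h
    rw [hH, SimpleGraph.deleteEdges_adj] at h
    exact h.2 (G.mem_edgeSet.mpr h.1)
  have hne : {k | ∃ f : V → ℕ, IsRDF H f ∧ ∑ v, f v = k}.Nonempty := by
    refine ⟨∑ _v : V, 1, fun _ => 1, ⟨fun v => by norm_num, fun v hv => by simp at hv⟩, rfl⟩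
  obtain ⟨f, hf, hsum⟩ := Nat.sInf_mem hne
  have h1 : ∀ v, 1 ≤ f v := by
    intro v
    rcases Nat.eq_zero_or_pos (f v) with h | h
    · obtain ⟨u, hu, _⟩ := hf.2 v h
      exact absurd hu (hbot v u)
    · exact h
  calc Fintype.card V = ∑ _v : V, 1 := by simp
    _ ≤ ∑ v, f v := Finset.sum_le_sum fun v _ => h1 v
    _ = romanDom H := hsum

theorem stmt10 {V : Type*} [Fintype V] (G : SimpleGraph V)
    (hRoman : romanDom G = 2 * domNum G) (hΔ : 2 ≤ maxDeg G) :
    bondage G ≤ romanBondage G := by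
  classical
  -- find a vertex of degree ≥ 2
  have hne : {d | ∃ v, deg G v = d}.Nonempty := by
    by_contra h
    rw [Set.not_nonempty_iff_eq_empty] at h
    rw [maxDeg, h] at hΔ
    simp at hΔ
  have hbdd : BddAbove {d | ∃ v, deg G v = d} := by
    refine ⟨Fintype.card V, fun d ⟨v, hv⟩ => ?_⟩
    rw [← hv, deg]
    calc (G.neighborSet v).ncard ≤ (Set.univ : Set V).ncard :=
          Set.ncard_le_ncard (Set.subset_univ _) Set.finite_univ
      _ = Fintype.card V := by rw [Set.ncard_univ, Nat.card_eq_fintype_card]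
  obtain ⟨v, hv⟩ := Nat.sSup_mem hne hbdd
  have hdeg : 2 ≤ deg G v := hv ▸ hΔ
  have hfin : (G.neighborSet v).Finite := Set.toFinite _
  obtain ⟨u, hu, w, hw, huw⟩ :=
    (Set.one_lt_ncard hfin).mp (lt_of_lt_of_le one_lt_two hdeg)
  have hadju : G.Adj v u := hu
  have hadjw : G.Adj v w := hw
  have hvu : v ≠ u := hadju.ne
  have hvw : v ≠ w := hadjw.ne
  -- build a cheap RDF for G
  set f : V → ℕ := fun x => if x = v then 2 else if x = u ∨ x = w then 0 else 1 with hfdef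
  have hfv : f v = 2 := by simp [hfdef]
  have hRDF : IsRDF G f := by
    constructor
    · intro x
      by_cases h1 : x = v
      · simp [hfdef, h1]
      · by_cases h2 : x = u ∨ x = w <;> simp [hfdef, h1, h2]
    · intro x hx
      by_cases h1 : x = v
      · simp [hfdef, h1] at hx
      · by_cases h2 : x = u ∨ x = w
        · rcases h2 with h2 | h2 <;> subst h2
          · exact ⟨v, hadju.symm, hfv⟩
          · exact ⟨v, hadjw.symm, hfv⟩
        · simp [hfdef, h1, h2] at hx
  -- compute the weight of f
  set s : Finset V := {v, u, w} with hsdef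
  have hvs : v ∉ ({u, w} : Finset V) := by simp [hvu, hvw]
  have huws : u ∉ ({w} : Finset V) := by simp [huw]
  have hcard_s : s.card = 3 := by
    rw [hsdef, Finset.card_insert_of_notMem hvs, Finset.card_insert_of_notMem huws,
      Finset.card_singleton]
  have hsum_s : ∑ x ∈ s, f x = 2 := by
    rw [hsdef, Finset.sum_insert hvs, Finset.sum_insert huws, Finset.sum_singleton]
    simp [hfdef, hvu.symm, hvw.symm, huw]
  have hsum_c : ∑ x ∈ Finset.univ \ s, f x = (Finset.univ \ s).card := by
    rw [Finset.card_eq_sum_ones]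
    refine Finset.sum_congr rfl fun x hx => ?_
    rw [Finset.mem_sdiff] at hx
    have h1 : x ≠ v := by intro h; exact hx.2 (by simp [hsdef, h])
    have h2 : x ≠ u := by intro h; exact hx.2 (by simp [hsdef, h])
    have h3 : x ≠ w := by intro h; exact hx.2 (by simp [hsdef, h])
    simp [hfdef, h1, h2, h3]
  have hsplit : ∑ x, f x = 2 + (Finset.univ \ s).card := by
    rw [← Finset.sum_sdiff (Finset.subset_univ s), hsum_s, hsum_c, Nat.add_comm]
  have hcardV : Fintype.card V = 3 + (Finset.univ \ s).card := by
    have h1 := Finset.card_sdiff_of_subset (Finset.subset_univ s)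
    have h2 := Finset.card_le_card (Finset.subset_univ s)
    rw [← Finset.card_univ]
    omega
  -- romanDom G < card V
  have hlt : romanDom G < Fintype.card V := by
    have h1 : romanDom G ≤ ∑ x, f x := Nat.sInf_le ⟨f, hRDF, rfl⟩
    omega
  -- deleting all edges increases romanDom
  have hincr : romanDom (G.deleteEdges G.edgeSet) > romanDom G :=
    lt_of_lt_of_le hlt (romanDom_deleteAll_ge G)
  -- so the romanBondage set is nonempty
  have hRBne : {k | ∃ B : Set (Sym2 V), B ⊆ G.edgeSet ∧
      romanDom (G.deleteEdges B) > romanDom G ∧ B.ncard = k}.Nonempty :=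
    ⟨(G.edgeSet).ncard, G.edgeSet, le_refl _, hincr, rfl⟩
  obtain ⟨B, hBsub, hBgt, hBcard⟩ := Nat.sInf_mem hRBne
  -- B also increases domNum
  have hdom : domNum (G.deleteEdges B) > domNum G := by
    have h1 : 2 * domNum G < 2 * domNum (G.deleteEdges B) :=
      lt_of_lt_of_le (hRoman ▸ hBgt) (roman_le_two_dom _)
    omega
  exact Nat.sInf_le ⟨B, hBsub, hdom, hBcard⟩
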